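/- The ordered pairing structure P is homogeneous: any isomorphism between finite substructures of P extends to an automorphism of P. -/

import Mathlib

/-- The universe of the ordered pairing structure `P`. -/
abbrev PP : Type := ℚ ⊕ (ℚ ⊕ ℚ × ℚ)

/-- The order of `P`: `I ≪ J ≪ Γ`, each copy of `ℚ` usual, `Γ` lexicographic. -/
def Ple : PP → PP → Prop
  | .inl a, .inl b => a ≤ b
  | .inl _, .inr _ => True
  | .inr _, .inl _ => False
  | .inr (.inl a), .inr (.inl b) => a ≤ b
  | .inr (.inl _), .inr (.inr _) => True
  | .inr (.inr _), .inr (.inl _) => False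
  | .inr (.inr p), .inr (.inr q) => p.1 < q.1 ∨ (p.1 = q.1 ∧ p.2 ≤ q.2)

/-- Automorphisms of `P`. -/
def IsPAut (e : PP ≃ PP) : Prop :=
  (∀ x y, Ple (e x) (e y) ↔ Ple x y) ∧
  (∀ a : ℚ, ∃ b : ℚ, e (.inl a) = .inl b) ∧
  (∀ a : ℚ, ∃ b : ℚ, e (.inr (.inl a)) = .inr (.inl b)) ∧
  (∀ p : ℚ × ℚ, ∃ q : ℚ × ℚ, e (.inr (.inr p)) = .inr (.inr q)) ∧
  (∀ i j i' j' : ℚ, e (.inl i) = .inl i' → e (.inr (.inl j)) = .inr (.inl j') →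
    e (.inr (.inr (i, j))) = .inr (.inr (i', j')))

/-- A subset of `P` is (substructure-)closed if it is closed under the projections `π₁, π₂`
and under the pairing `ρ` when both arguments are present. -/
def PClosed (A : Set PP) : Prop :=
  (∀ p : ℚ × ℚ, (.inr (.inr p) : PP) ∈ A → (.inl p.1 : PP) ∈ A ∧ (.inr (.inl p.2) : PP) ∈ A) ∧
  (∀ i j : ℚ, (.inl i : PP) ∈ A → (.inr (.inl j) : PP) ∈ A → (.inr (.inr (i, j)) : PP) ∈ A)

lemma cmp_helper {a b c d : ℚ} (h1 : a ≤ b ↔ c ≤ d) (h2 : b ≤ a ↔ d ≤ c) :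
    cmp a b = cmp c d := by
  rcases lt_trichotomy a b with hlt | heq | hgt
  · have : c < d := lt_of_le_not_ge (h1.mp hlt.le) (fun hc => absurd (h2.mpr hc) (not_le.mpr hlt))
    rw [(cmp_eq_lt_iff _ _).mpr hlt, (cmp_eq_lt_iff _ _).mpr this]
  · have : c = d := le_antisymm (h1.mp heq.le) (h2.mp heq.ge)
    rw [(cmp_eq_eq_iff _ _).mpr heq, (cmp_eq_eq_iff _ _).mpr this]
  · have : d < c := lt_of_le_not_ge (h2.mp hgt.le) (fun hc => absurd (h1.mpr hc) (not_le.mpr hgt))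
    rw [(cmp_eq_gt_iff _ _).mpr hgt, (cmp_eq_gt_iff _ _).mpr this]

open Order Order.PartialIso in
/-- Any finite partial order-isomorphism of `ℚ` extends to an order automorphism. -/
lemma rat_extend (s : Finset (ℚ × ℚ))
    (hs : ∀ p ∈ s, ∀ q ∈ s, cmp p.1 q.1 = cmp p.2 q.2) :
    ∃ e : ℚ ≃o ℚ, ∀ p ∈ s, e p.1 = p.2 := by
  let p₀ : PartialIso ℚ ℚ := ⟨s, hs⟩
  let to_cofinal : ℚ ⊕ ℚ → Cofinal (PartialIso ℚ ℚ) := fun p ↦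
    Sum.recOn p (definedAtLeft ℚ) (definedAtRight ℚ)
  let our_ideal : Ideal (PartialIso ℚ ℚ) := idealOfCofinals p₀ to_cofinal
  let F := fun a ↦ funOfIdeal a our_ideal (cofinal_meets_idealOfCofinals _ to_cofinal (Sum.inl a))
  let G := fun b ↦ invOfIdeal b our_ideal (cofinal_meets_idealOfCofinals _ to_cofinal (Sum.inr b))
  refine ⟨OrderIso.ofCmpEqCmp (fun a ↦ (F a).val) (fun b ↦ (G b).val) fun a b ↦ ?_, ?_⟩
  · rcases (F a).prop with ⟨f, hf, ha⟩
    rcases (G b).prop with ⟨g, hg, hb⟩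
    rcases our_ideal.directed _ hf _ hg with ⟨m, _, fm, gm⟩
    exact m.prop (a, _) (fm ha) (_, b) (gm hb)
  · rintro ⟨a, b⟩ hab
    rcases (F a).prop with ⟨f, hf, ha⟩
    rcases our_ideal.directed _ hf _ (mem_idealOfCofinals p₀ to_cofinal) with ⟨m, _, fm, pm⟩
    have hm := m.prop (a, (F a).val) (fm ha) (a, b) (pm hab)
    simp only [cmp_self_eq_eq] at hm
    exact (cmp_eq_eq_iff _ _).mp hm.symm

/-- `P` is homogeneous: any isomorphism between finite substructures of `P`
extends to an automorphism of `P`. -/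
theorem P_homogeneous (A : Set PP) (hA : A.Finite) (hAcl : PClosed A)
    (h : PP → PP) (hinj : Set.InjOn h A) (hBcl : PClosed (h '' A))
    -- `h` preserves the order:
    (hord : ∀ x ∈ A, ∀ y ∈ A, (Ple (h x) (h y) ↔ Ple x y))
    -- `h` preserves the sorts:
    (hI : ∀ i : ℚ, (.inl i : PP) ∈ A → ∃ i' : ℚ, h (.inl i) = .inl i')
    (hJ : ∀ j : ℚ, (.inr (.inl j) : PP) ∈ A → ∃ j' : ℚ, h (.inr (.inl j)) = .inr (.inl j'))
    (hG : ∀ p : ℚ × ℚ, (.inr (.inr p) : PP) ∈ A →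
      ∃ q : ℚ × ℚ, h (.inr (.inr p)) = .inr (.inr q))
    -- `h` preserves the pairing function:
    (hρ : ∀ i j i' j' : ℚ, (.inr (.inr (i, j)) : PP) ∈ A →
      h (.inl i) = .inl i' → h (.inr (.inl j)) = .inr (.inl j') →
      h (.inr (.inr (i, j))) = .inr (.inr (i', j'))) :
    ∃ e : PP ≃ PP, IsPAut e ∧ ∀ x ∈ A, e x = h x := by
  classical
  -- the trace of `h` on the sort `I`
  set SI : Set (ℚ × ℚ) :=
    {p | (Sum.inl p.1 : PP) ∈ A ∧ h (Sum.inl p.1) = Sum.inl p.2} with hSI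
  have hSIfin : SI.Finite := by
    have himg : ((fun p : ℚ × ℚ => (Sum.inl p.1 : PP)) '' SI).Finite :=
      hA.subset (by rintro _ ⟨p, hp, rfl⟩; exact hp.1)
    refine Set.Finite.of_finite_image himg ?_
    rintro ⟨a, b⟩ ⟨ha, hb⟩ ⟨c, d⟩ ⟨hc, hd⟩ hac
    simp only [Sum.inl.injEq] at hac
    subst hac
    have : (Sum.inl b : PP) = Sum.inl d := by rw [← hb, ← hd]
    simp only [Sum.inl.injEq] at this
    simp [this]
  -- the trace of `h` on the sort `J`
  set SJ : Set (ℚ × ℚ) :=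
    {p | (Sum.inr (Sum.inl p.1) : PP) ∈ A ∧ h (Sum.inr (Sum.inl p.1)) = Sum.inr (Sum.inl p.2)}
      with hSJ
  have hSJfin : SJ.Finite := by
    have himg : ((fun p : ℚ × ℚ => (Sum.inr (Sum.inl p.1) : PP)) '' SJ).Finite :=
      hA.subset (by rintro _ ⟨p, hp, rfl⟩; exact hp.1)
    refine Set.Finite.of_finite_image himg ?_
    rintro ⟨a, b⟩ ⟨ha, hb⟩ ⟨c, d⟩ ⟨hc, hd⟩ hac
    simp only [Sum.inr.injEq, Sum.inl.injEq] at hac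
    subst hac
    have : (Sum.inr (Sum.inl b) : PP) = Sum.inr (Sum.inl d) := by rw [← hb, ← hd]
    simp only [Sum.inr.injEq, Sum.inl.injEq] at this
    simp [this]
  -- extend each trace to order automorphisms of ℚ
  obtain ⟨eI, heI⟩ := rat_extend hSIfin.toFinset (by
    rintro ⟨a, b⟩ hp ⟨c, d⟩ hq
    rw [Set.Finite.mem_toFinset] at hp hq
    obtain ⟨ha, hb⟩ := hp
    obtain ⟨hc, hd⟩ := hq
    refine cmp_helper ?_ ?_
    · have := hord (Sum.inl a) ha (Sum.inl c) hc
      rw [hb, hd] at this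
      exact (show Ple (Sum.inl b) (Sum.inl d) ↔ Ple (Sum.inl a) (Sum.inl c) from this).symm
    · have := hord (Sum.inl c) hc (Sum.inl a) ha
      rw [hb, hd] at this
      exact (show Ple (Sum.inl d) (Sum.inl b) ↔ Ple (Sum.inl c) (Sum.inl a) from this).symm)
  obtain ⟨eJ, heJ⟩ := rat_extend hSJfin.toFinset (by
    rintro ⟨a, b⟩ hp ⟨c, d⟩ hq
    rw [Set.Finite.mem_toFinset] at hp hq
    obtain ⟨ha, hb⟩ := hp
    obtain ⟨hc, hd⟩ := hq
    refine cmp_helper ?_ ?_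
    · have := hord (Sum.inr (Sum.inl a)) ha (Sum.inr (Sum.inl c)) hc
      rw [hb, hd] at this
      exact (show Ple (Sum.inr (Sum.inl b)) (Sum.inr (Sum.inl d)) ↔
        Ple (Sum.inr (Sum.inl a)) (Sum.inr (Sum.inl c)) from this).symm
    · have := hord (Sum.inr (Sum.inl c)) hc (Sum.inr (Sum.inl a)) ha
      rw [hb, hd] at this
      exact (show Ple (Sum.inr (Sum.inl d)) (Sum.inr (Sum.inl b)) ↔
        Ple (Sum.inr (Sum.inl c)) (Sum.inr (Sum.inl a)) from this).symm)
  -- assemble the automorphism of `P`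
  refine ⟨Equiv.sumCongr eI.toEquiv (Equiv.sumCongr eJ.toEquiv
      (Equiv.prodCongr eI.toEquiv eJ.toEquiv)), ⟨?_, ?_, ?_, ?_, ?_⟩, ?_⟩
  · rintro (a | (a | ⟨a1, a2⟩)) (b | (b | ⟨b1, b2⟩)) <;>
      simp [Ple, eI.lt_iff_lt, eI.le_iff_le, eJ.le_iff_le, eI.injective.eq_iff]
  · intro a; exact ⟨eI a, rfl⟩
  · intro a; exact ⟨eJ a, rfl⟩
  · intro p; exact ⟨(eI p.1, eJ p.2), rfl⟩
  · intro i j i' j' hi hj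
    simp only [Equiv.sumCongr_apply, Sum.map_inl, Sum.map_inr, Equiv.prodCongr_apply,
      Sum.inl.injEq, Sum.inr.injEq] at hi hj ⊢
    exact Prod.ext hi hj
  · rintro (i | (j | ⟨i, j⟩)) hx
    · obtain ⟨i', hi'⟩ := hI i hx
      have : eI i = i' := heI (i, i') (hSIfin.mem_toFinset.mpr ⟨hx, hi'⟩)
      simp [this, hi']
    · obtain ⟨j', hj'⟩ := hJ j hx
      have : eJ j = j' := heJ (j, j') (hSJfin.mem_toFinset.mpr ⟨hx, hj'⟩)
      simp [this, hj']
    · obtain ⟨hiA, hjA⟩ := hAcl.1 (i, j) hx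
      obtain ⟨i', hi'⟩ := hI i hiA
      obtain ⟨j', hj'⟩ := hJ j hjA
      have hIi : eI i = i' := heI (i, i') (hSIfin.mem_toFinset.mpr ⟨hiA, hi'⟩)
      have hJj : eJ j = j' := heJ (j, j') (hSJfin.mem_toFinset.mpr ⟨hjA, hj'⟩)
      have := hρ i j i' j' hx hi' hj'
      simp [hIi, hJj, this]
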